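/- arXiv:2508.15866 — 2 statements merged into one kernel-verified Lean document; each statement's English description precedes it below -/
import Mathlib

section
/- Gumbel-top-1 sampling correctness: if G₁, ..., Gₙ are independent standard Gumbel random variables and ℓ₁, ..., ℓₙ are real logits, then P(argmax_i (ℓᵢ + Gᵢ) = k) = exp(ℓₖ) / Σᵢ exp(ℓᵢ), i.e., the argmax of Gumbel-perturbed logits is distributed according to the softmax of the logits. -/
open Real Set MeasureTheory Filter

lemma expNeg_hasDeriv (t : ℝ) : HasDerivAt (fun t : ℝ => Real.exp (-t)) (-Real.exp (-t)) t := by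
  simpa [Function.comp_def] using ((Real.hasDerivAt_exp (-t)).comp t (hasDerivAt_neg t))

lemma expNeg_injOn (s : Set ℝ) : Set.InjOn (fun t : ℝ => Real.exp (-t)) s := by
  intro a _ b _ h
  have := Real.exp_injective h
  linarith [neg_injective this]

lemma image_expNeg_Iic (x : ℝ) :
    (fun t : ℝ => Real.exp (-t)) '' Set.Iic x = Set.Ici (Real.exp (-x)) := by
  ext u
  constructor
  · rintro ⟨t, ht, rfl⟩
    exact Real.exp_le_exp.2 (neg_le_neg ht)
  · intro hu
    have hu0 : 0 < u := lt_of_lt_of_le (Real.exp_pos _) hu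
    refine ⟨-Real.log u, ?_, by simp [Real.exp_log hu0]⟩
    have := Real.log_le_log (Real.exp_pos _) hu
    rw [Real.log_exp] at this
    simp only [Set.mem_Iic]
    linarith

lemma image_expNeg_univ :
    (fun t : ℝ => Real.exp (-t)) '' Set.univ = Set.Ioi (0:ℝ) := by
  ext u
  constructor
  · rintro ⟨t, _, rfl⟩; exact Real.exp_pos _
  · intro hu; exact ⟨-Real.log u, trivial, by simp [Real.exp_log hu]⟩

lemma integral_exp_neg_mul_Ioi {a : ℝ} (ha : 0 < a) (c : ℝ) :
    ∫ u in Set.Ioi c, Real.exp (-(a*u)) = Real.exp (-(a*c)) / a := by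
  have hderiv : ∀ x ∈ Set.Ici c, HasDerivAt (fun u => -Real.exp (-(a*u)) / a) (Real.exp (-(a*x))) x := by
    intro x _
    have h1 : HasDerivAt (fun u : ℝ => -(a*u)) (-a) x := by
      exact (((hasDerivAt_id x).const_mul a).neg).congr_deriv (by ring)
    have h2 := (Real.hasDerivAt_exp (-(a*x))).comp x h1
    have h3 := (h2.neg).div_const a
    refine h3.congr_deriv ?_
    field_simp
  have hint : IntegrableOn (fun u => Real.exp (-(a*u))) (Set.Ioi c) := by
    simpa [neg_mul] using exp_neg_integrableOn_Ioi c ha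
  have htend : Tendsto (fun u => -Real.exp (-(a*u)) / a) atTop (nhds 0) := by
    have h0 : Tendsto (fun u : ℝ => -(a*u)) atTop atBot := by
      have := (tendsto_const_mul_atTop_of_pos ha).2 (tendsto_id (α := ℝ))
      exact tendsto_neg_atBot_iff.2 this
    have := (Real.tendsto_exp_atBot).comp h0
    have h2 := (this.neg).div_const a
    simpa using h2
  have := integral_Ioi_of_hasDerivAt_of_tendsto' hderiv hint htend
  rw [this]; ring
lemma image_expNeg_subset (s : Set ℝ) :
    (fun t : ℝ => Real.exp (-t)) '' s ⊆ Set.Ioi 0 := by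
  rintro u ⟨t, _, rfl⟩; exact Real.exp_pos _

lemma integrableOn_gumbel {a : ℝ} (ha : 0 < a) {s : Set ℝ} (hs : MeasurableSet s) :
    IntegrableOn (fun t => Real.exp (-t) * Real.exp (-(a * Real.exp (-t)))) s := by
  have hint : IntegrableOn (fun u => Real.exp (-(a*u))) ((fun t : ℝ => Real.exp (-t)) '' s) := by
    refine IntegrableOn.mono_set ?_ (image_expNeg_subset s)
    simpa [neg_mul] using exp_neg_integrableOn_Ioi 0 ha
  have := (integrableOn_image_iff_integrableOn_abs_deriv_smul hs
    (fun x _ => (expNeg_hasDeriv x).hasDerivWithinAt) (expNeg_injOn s)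
    (fun u => Real.exp (-(a*u)))).1 hint
  simpa [abs_of_nonneg (Real.exp_pos _).le, smul_eq_mul] using this

lemma integral_gumbel {a : ℝ} (ha : 0 < a) {s : Set ℝ} (hs : MeasurableSet s) :
    ∫ t in s, Real.exp (-t) * Real.exp (-(a * Real.exp (-t)))
      = ∫ u in (fun t : ℝ => Real.exp (-t)) '' s, Real.exp (-(a*u)) := by
  rw [integral_image_eq_integral_abs_deriv_smul hs
    (fun x _ => (expNeg_hasDeriv x).hasDerivWithinAt) (expNeg_injOn s)
    (fun u => Real.exp (-(a*u)))]
  simp [abs_of_nonneg (Real.exp_pos _).le, smul_eq_mul]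

lemma integral_gumbel_Iic {a : ℝ} (ha : 0 < a) (x : ℝ) :
    ∫ t in Set.Iic x, Real.exp (-t) * Real.exp (-(a * Real.exp (-t)))
      = Real.exp (-(a * Real.exp (-x))) / a := by
  rw [integral_gumbel ha measurableSet_Iic, image_expNeg_Iic,
    integral_Ici_eq_integral_Ioi, integral_exp_neg_mul_Ioi ha]

lemma integral_gumbel_univ {a : ℝ} (ha : 0 < a) :
    ∫ t, Real.exp (-t) * Real.exp (-(a * Real.exp (-t))) = 1 / a := by
  rw [← setIntegral_univ, integral_gumbel ha MeasurableSet.univ, image_expNeg_univ,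
    integral_exp_neg_mul_Ioi ha]
  simp
noncomputable def gumbelM : Measure ℝ :=
  MeasureTheory.volume.withDensity
    (fun t => ENNReal.ofReal (Real.exp (-t) * Real.exp (-(1 * Real.exp (-t)))))

lemma gumbel_pdf_meas : Measurable
    (fun t => ENNReal.ofReal (Real.exp (-t) * Real.exp (-(1 * Real.exp (-t))))) := by
  fun_prop

lemma gumbelM_Iic (x : ℝ) : gumbelM (Set.Iic x) = ENNReal.ofReal (Real.exp (-Real.exp (-x))) := by
  rw [gumbelM, withDensity_apply _ measurableSet_Iic,
    ← ofReal_integral_eq_lintegral_ofReal ((integrableOn_gumbel one_pos measurableSet_Iic))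
      (Filter.Eventually.of_forall (fun t => by positivity)),
    integral_gumbel_Iic one_pos]
  norm_num

lemma gumbelM_univ : gumbelM Set.univ = 1 := by
  rw [gumbelM, withDensity_apply _ MeasurableSet.univ, Measure.restrict_univ,
    ← ofReal_integral_eq_lintegral_ofReal
      (integrableOn_univ.mp (integrableOn_gumbel one_pos MeasurableSet.univ))
      (Filter.Eventually.of_forall (fun t => by positivity)),
    integral_gumbel_univ one_pos]
  norm_num

instance : IsProbabilityMeasure gumbelM := ⟨gumbelM_univ⟩

lemma gumbelM_Iio (x : ℝ) : gumbelM (Set.Iio x) = ENNReal.ofReal (Real.exp (-Real.exp (-x))) := by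
  have h1 : gumbelM {x} = 0 :=
    (withDensity_absolutelyContinuous _ _) (measure_singleton x)
  have : gumbelM (Set.Iic x) = gumbelM (Set.Iio x) + gumbelM {x} := by
    rw [← measure_union (by simp) (measurableSet_singleton x), Set.Iio_union_right]
  rw [← gumbelM_Iic, this, h1, add_zero]

lemma gumbelM_lintegral {c : ℝ} (hc : 0 ≤ c) :
    ∫⁻ t, ENNReal.ofReal (Real.exp (-(c * Real.exp (-t)))) ∂gumbelM
      = ENNReal.ofReal (1 / (1 + c)) := by
  rw [gumbelM, lintegral_withDensity_eq_lintegral_mul _ gumbel_pdf_meas (by fun_prop)]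
  have h1c : (0:ℝ) < 1 + c := by linarith
  have heq : ∀ t : ℝ,
      (ENNReal.ofReal (Real.exp (-t) * Real.exp (-(1 * Real.exp (-t)))) *
        ENNReal.ofReal (Real.exp (-(c * Real.exp (-t)))))
      = ENNReal.ofReal (Real.exp (-t) * Real.exp (-((1+c) * Real.exp (-t)))) := by
    intro t
    rw [← ENNReal.ofReal_mul (by positivity)]
    congr 1
    rw [mul_assoc, ← Real.exp_add]
    ring_nf
  simp only [Pi.mul_apply, heq]
  rw [← ofReal_integral_eq_lintegral_ofReal
      (integrableOn_univ.mp (integrableOn_gumbel h1c MeasurableSet.univ))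
      (Filter.Eventually.of_forall (fun t => by positivity)),
    integral_gumbel_univ h1c]
/-- Gumbel-top-1 sampling: if `G 1, …, G n` are i.i.d. standard Gumbel random
variables (CDF `exp (-exp (-x))`) and `ℓ` are real logits, then the probability
that index `k` is the (a.s. unique) argmax of the perturbed logits `ℓ i + G i`
equals the softmax probability `exp (ℓ k) / ∑ i, exp (ℓ i)`. -/
theorem stmt_13 {Ω : Type*} [MeasurableSpace Ω] (P : Measure Ω)
    [IsProbabilityMeasure P] (n : ℕ) (hn : 0 < n)
    (G : Fin n → Ω → ℝ) (hmeas : ∀ i, Measurable (G i))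
    (hindep : ProbabilityTheory.iIndepFun G P)
    (hcdf : ∀ (i : Fin n) (x : ℝ),
      P {ω | G i ω ≤ x} = ENNReal.ofReal (Real.exp (-Real.exp (-x))))
    (ℓ : Fin n → ℝ) (k : Fin n) :
    P {ω | ∀ i : Fin n, i ≠ k → ℓ i + G i ω < ℓ k + G k ω} =
      ENNReal.ofReal (Real.exp (ℓ k) / ∑ i : Fin n, Real.exp (ℓ i)) := by
  obtain ⟨m, rfl⟩ : ∃ m, n = m + 1 := ⟨n - 1, (Nat.succ_pred_eq_of_pos hn).symm⟩
  -- each G i has law gumbelM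
  have hmap : ∀ i, P.map (G i) = gumbelM := by
    intro i
    refine MeasureTheory.Measure.ext_of_Iic (P.map (G i)) gumbelM (fun x => ?_)
    rw [Measure.map_apply (hmeas i) measurableSet_Iic, gumbelM_Iic]
    exact hcdf i x
  -- joint law is the product measure
  set T : Ω → (Fin (m+1) → ℝ) := fun ω i => G i ω with hTdef
  have hT : Measurable T := measurable_pi_lambda _ fun i => hmeas i
  have hjoint : P.map T = Measure.pi (fun _ : Fin (m+1) => gumbelM) := by
    refine (Measure.pi_eq fun s hs => ?_).symm
    rw [Measure.map_apply hT (MeasurableSet.univ_pi hs)]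
    have hpre : T ⁻¹' Set.pi Set.univ s = ⋂ i, G i ⁻¹' s i := by
      ext ω; simp [hTdef, Set.mem_pi]
    rw [hpre, hindep.meas_iInter (fun i => ⟨s i, hs i, rfl⟩)]
    exact Finset.prod_congr rfl fun i _ => by
      rw [← hmap i, Measure.map_apply (hmeas i) (hs i)]
  -- rewrite the event via T
  set S : Set (Fin (m+1) → ℝ) := {g | ∀ i, i ≠ k → ℓ i + g i < ℓ k + g k} with hSdef
  have hSmeas : MeasurableSet S := by
    have : S = ⋂ i, ⋂ (_ : i ≠ k), {g : Fin (m+1) → ℝ | ℓ i + g i < ℓ k + g k} := by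
      ext g; simp [hSdef]
    rw [this]
    exact MeasurableSet.iInter fun i => MeasurableSet.iInter fun _ =>
      measurableSet_lt (by fun_prop) (by fun_prop)
  have hev : {ω | ∀ i : Fin (m+1), i ≠ k → ℓ i + G i ω < ℓ k + G k ω} = T ⁻¹' S := rfl
  rw [hev, ← Measure.map_apply hT hSmeas, hjoint]
  -- split off coordinate k
  set e := MeasurableEquiv.piFinSuccAbove (fun _ : Fin (m+1) => ℝ) k with hedef
  have hmp : MeasurePreserving e (Measure.pi fun _ : Fin (m+1) => gumbelM)
      (gumbelM.prod (Measure.pi fun _ : Fin m => gumbelM)) :=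
    measurePreserving_piFinSuccAbove (fun _ : Fin (m+1) => gumbelM) k
  set A : Set (ℝ × (Fin m → ℝ)) :=
    {p | ∀ j : Fin m, p.2 j < p.1 + ℓ k - ℓ (k.succAbove j)} with hAdef
  have he : ∀ g : Fin (m+1) → ℝ, e g = (g k, fun j => g (k.succAbove j)) := fun g => rfl
  have hSA : S = e ⁻¹' A := by
    ext g
    simp only [hSdef, hAdef, Set.mem_setOf_eq, Set.mem_preimage, he]
    constructor
    · intro h j
      have := h (k.succAbove j) (Fin.succAbove_ne k j)
      linarith
    · intro h i hi
      obtain ⟨j, hj⟩ := Fin.exists_succAbove_eq hi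
      have := h j
      rw [hj] at this
      linarith
  rw [hSA, hmp.measure_preimage_equiv]
  -- compute by Fubini
  have hAmeas : MeasurableSet A := by
    have : A = ⋂ j : Fin m, {p : ℝ × (Fin m → ℝ) | p.2 j < p.1 + ℓ k - ℓ (k.succAbove j)} := by
      ext p; simp [hAdef]
    rw [this]
    exact MeasurableSet.iInter fun j => measurableSet_lt (by fun_prop) (by fun_prop)
  rw [Measure.prod_apply hAmeas]
  set c : ℝ := ∑ j : Fin m, Real.exp (ℓ (k.succAbove j) - ℓ k) with hcdef
  have hc0 : 0 ≤ c := Finset.sum_nonneg fun j _ => (Real.exp_pos _).le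
  have hslice : ∀ x : ℝ,
      (Measure.pi fun _ : Fin m => gumbelM) (Prod.mk x ⁻¹' A)
        = ENNReal.ofReal (Real.exp (-(c * Real.exp (-x)))) := by
    intro x
    have h1 : Prod.mk x ⁻¹' A
        = Set.pi Set.univ (fun j : Fin m => Set.Iio (x + ℓ k - ℓ (k.succAbove j))) := by
      ext g; simp [hAdef, Set.mem_pi]
    rw [h1, Measure.pi_pi]
    have h2 : ∀ j : Fin m, gumbelM (Set.Iio (x + ℓ k - ℓ (k.succAbove j)))
        = ENNReal.ofReal (Real.exp (-Real.exp (-(x + ℓ k - ℓ (k.succAbove j))))) :=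
      fun j => gumbelM_Iio _
    simp only [h2]
    rw [← ENNReal.ofReal_prod_of_nonneg (fun j _ => (Real.exp_pos _).le)]
    congr 1
    rw [← Real.exp_sum]
    congr 1
    rw [hcdef, Finset.sum_mul, ← Finset.sum_neg_distrib]
    refine Finset.sum_congr rfl fun j _ => ?_
    rw [← Real.exp_add]
    ring_nf
  simp only [hslice]
  rw [gumbelM_lintegral hc0]
  congr 1
  have hsum : ∑ i : Fin (m+1), Real.exp (ℓ i)
      = Real.exp (ℓ k) + ∑ j : Fin m, Real.exp (ℓ (k.succAbove j)) :=
    Fin.sum_univ_succAbove _ k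
  have hck : c * Real.exp (ℓ k) = ∑ j : Fin m, Real.exp (ℓ (k.succAbove j)) := by
    rw [hcdef, Finset.sum_mul]
    exact Finset.sum_congr rfl fun j _ => by rw [← Real.exp_add]; ring_nf
  have hek : 0 < Real.exp (ℓ k) := Real.exp_pos _
  rw [hsum, ← hck]
  field_simp
end

section
/- Adaptive rejection sampling with a validity mask is equivalent to renormalized masked sampling for a single draw: given a probability vector p on a finite set T and a valid subset V ⊆ T with p(V) > 0, the distribution of the first valid sample under the scheme 'sample from p without replacement in an order given by one Gumbel-perturbation ranking, return the first element in V' equals the conditional distribution p(· | V). -/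
open MeasureTheory Real Set Filter

lemma gumbel_hasDerivAt {c : ℝ} (hc : c ≠ 0) (x : ℝ) :
    HasDerivAt (fun y => Real.exp (-c * Real.exp (-y)) / c)
      (Real.exp (-x) * Real.exp (-c * Real.exp (-x))) x := by
  have h1 : HasDerivAt (fun y : ℝ => -c * Real.exp (-y)) (c * Real.exp (-x)) x := by
    have := ((hasDerivAt_neg x).exp).const_mul (-c)
    refine this.congr_deriv ?_
    ring
  have := h1.exp.div_const c
  refine this.congr_deriv ?_
  field_simp
  try ring

lemma gumbel_tendsto_top {c : ℝ} (hc : 0 < c) :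
    Tendsto (fun y => Real.exp (-c * Real.exp (-y)) / c) atTop (nhds (1 / c)) := by
  have h0 : Tendsto (fun y : ℝ => -c * Real.exp (-y)) atTop (nhds 0) := by
    have := (Real.tendsto_exp_comp_nhds_zero (f := fun y : ℝ => -y)).2 tendsto_neg_atTop_atBot
    simpa using this.const_mul (-c)
  have := (Real.continuous_exp.tendsto 0).comp h0
  simpa using this.div_const c

lemma gumbel_tendsto_bot {c : ℝ} (hc : 0 < c) :
    Tendsto (fun y => Real.exp (-c * Real.exp (-y)) / c) atBot (nhds 0) := by
  have h0 : Tendsto (fun y : ℝ => -c * Real.exp (-y)) atBot atBot := by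
    have h1 : Tendsto (fun y : ℝ => Real.exp (-y)) atBot atTop :=
      Real.tendsto_exp_atTop.comp tendsto_neg_atBot_atTop
    have h2 := h1.const_mul_atTop hc
    rw [show (fun y : ℝ => -c * Real.exp (-y)) = fun y : ℝ => -(c * Real.exp (-y)) by
      funext y; ring]
    exact tendsto_neg_atBot_iff.2 h2
  have := Real.tendsto_exp_atBot.comp h0
  simpa using this.div_const c

lemma gumbel_integrable {c : ℝ} (hc : 0 < c) :
    Integrable (fun x => Real.exp (-x) * Real.exp (-c * Real.exp (-x))) := by
  set g := fun x : ℝ => Real.exp (-x) * Real.exp (-c * Real.exp (-x)) with hg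
  have hgc : Continuous g := by fun_prop
  have hgnn : ∀ x, 0 ≤ g x := fun x => by positivity
  refine integrable_of_intervalIntegral_norm_bounded (μ := volume) (l := atTop)
    (a := fun n : ℕ => -(n : ℝ)) (b := fun n : ℕ => (n : ℝ)) (1 / c)
    (fun n => hgc.integrableOn_Ioc) (tendsto_neg_atBot_iff.2 tendsto_natCast_atTop_atTop) tendsto_natCast_atTop_atTop ?_
  filter_upwards with n
  have hle : -(n : ℝ) ≤ (n : ℝ) := by
    have : (0:ℝ) ≤ n := Nat.cast_nonneg n
    linarith
  have h1 : (∫ x in -(n:ℝ)..(n:ℝ), ‖g x‖) = ∫ x in -(n:ℝ)..(n:ℝ), g x := by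
    apply intervalIntegral.integral_congr
    intro x _
    exact Real.norm_of_nonneg (hgnn x)
  rw [h1, intervalIntegral.integral_eq_sub_of_hasDerivAt
    (fun x _ => gumbel_hasDerivAt hc.ne' x)
    ((hgc.intervalIntegrable _ _))]
  have h2 : Real.exp (-c * Real.exp (-(n:ℝ))) / c ≤ 1 / c := by
    gcongr
    have : (0:ℝ) ≤ c * Real.exp (-(n:ℝ)) := by positivity
    rw [show -c * Real.exp (-(n:ℝ)) = -(c * Real.exp (-(n:ℝ))) by ring]
    exact Real.exp_le_one_iff.2 (by linarith)
  have h3 : 0 ≤ Real.exp (-c * Real.exp (-(-(n:ℝ)))) / c := by positivity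
  linarith [h2, h3]

lemma gumbel_integral {c : ℝ} (hc : 0 < c) :
    ∫ x : ℝ, Real.exp (-x) * Real.exp (-c * Real.exp (-x)) = 1 / c := by
  have := integral_of_hasDerivAt_of_tendsto (f := fun y => Real.exp (-c * Real.exp (-y)) / c)
    (fun x => gumbel_hasDerivAt hc.ne' x) (gumbel_integrable hc)
    (gumbel_tendsto_bot hc) (gumbel_tendsto_top hc)
  simpa using this

noncomputable def gumbelMeasure : Measure ℝ :=
  volume.withDensity (fun x => ENNReal.ofReal (Real.exp (-x) * Real.exp (-1 * Real.exp (-x))))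

lemma gumbelMeasure_Iic (a : ℝ) :
    gumbelMeasure (Iic a) = ENNReal.ofReal (Real.exp (-Real.exp (-a))) := by
  rw [gumbelMeasure, withDensity_apply _ measurableSet_Iic]
  rw [← ofReal_integral_eq_lintegral_ofReal
    ((gumbel_integrable one_pos).integrableOn)
    (Filter.Eventually.of_forall (fun x => by positivity))]
  congr 1
  have := integral_Iic_of_hasDerivAt_of_tendsto' (a := a)
    (f := fun y => Real.exp (-1 * Real.exp (-y)) / 1)
    (fun x _ => gumbel_hasDerivAt one_ne_zero x)
    ((gumbel_integrable one_pos).integrableOn)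
    (gumbel_tendsto_bot one_pos)
  rw [this]
  simp

instance : IsProbabilityMeasure gumbelMeasure := by
  constructor
  rw [gumbelMeasure, withDensity_apply _ MeasurableSet.univ, Measure.restrict_univ,
    ← ofReal_integral_eq_lintegral_ofReal (gumbel_integrable one_pos)
      (Filter.Eventually.of_forall (fun x => by positivity)),
    gumbel_integral one_pos]
  norm_num

lemma gumbelMeasure_Iio (a : ℝ) :
    gumbelMeasure (Iio a) = ENNReal.ofReal (Real.exp (-Real.exp (-a))) := by
  have h0 : gumbelMeasure {a} = 0 :=
    (withDensity_absolutelyContinuous _ _) (measure_singleton a)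
  have : gumbelMeasure (Iic a) = gumbelMeasure (Iio a) := by
    rw [show Iic a = Iio a ∪ {a} by ext x; simp [le_iff_lt_or_eq]]
    refine le_antisymm ((measure_union_le _ _).trans (by rw [h0, add_zero])) ?_
    exact measure_mono (subset_union_left)
  rw [← this, gumbelMeasure_Iic]

/-- Adaptive rejection sampling via one Gumbel-perturbation ranking is equivalent
to renormalized masked sampling: if `p` is a positive probability mass function
on a finite set `T`, `V` a nonempty subset, `ℓ t = log (p t)` and `G t` are
i.i.d. standard Gumbel, then for each `v ∈ V` the probability that `v` is the
first element of the descending ranking by `ℓ t + G t` that lies in `V` (i.e.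
`v` beats every other element of `V`) is `p v / p V`. -/
theorem stmt_14 {T : Type*} [Fintype T] [DecidableEq T]
    {Ω : Type*} [MeasurableSpace Ω] (P : Measure Ω) [IsProbabilityMeasure P]
    (p : T → ℝ) (hp : ∀ t, 0 < p t) (hsum : ∑ t : T, p t = 1)
    (V : Finset T) (hV : V.Nonempty)
    (G : T → Ω → ℝ) (hmeas : ∀ t, Measurable (G t))
    (hindep : ProbabilityTheory.iIndepFun G P)
    (hcdf : ∀ (t : T) (x : ℝ),
      P {ω | G t ω ≤ x} = ENNReal.ofReal (Real.exp (-Real.exp (-x))))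
    (v : T) (hv : v ∈ V) :
    P {ω | ∀ t ∈ V, t ≠ v → Real.log (p t) + G t ω < Real.log (p v) + G v ω} =
      ENNReal.ofReal (p v / ∑ t ∈ V, p t) := by
  classical
  set ℓ : T → ℝ := fun t => Real.log (p t) with hℓ
  -- identify the law of each G t
  have hmap : ∀ t, P.map (G t) = gumbelMeasure := by
    intro t
    have : IsProbabilityMeasure (P.map (G t)) :=
      Measure.isProbabilityMeasure_map (hmeas t).aemeasurable
    refine Measure.ext_of_Iic _ _ (fun a => ?_)
    rw [Measure.map_apply (hmeas t) measurableSet_Iic, gumbelMeasure_Iic]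
    exact hcdf t a
  have hIio : ∀ (t : T) (a : ℝ),
      P (G t ⁻¹' Set.Iio a) = ENNReal.ofReal (Real.exp (-Real.exp (-a))) := by
    intro t a
    rw [← Measure.map_apply (hmeas t) measurableSet_Iio, hmap t, gumbelMeasure_Iio]
  set W : Finset T := V.erase v with hW
  set s : ℝ := ∑ t ∈ W, p t with hs
  have hs0 : 0 ≤ s := Finset.sum_nonneg fun t _ => (hp t).le
  have hpsum : p v + s = ∑ t ∈ V, p t := Finset.add_sum_erase V p hv
  set Y : Ω → (↥W → ℝ) := fun ω t => G (t : T) ω with hYdef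
  have hY : Measurable Y := measurable_pi_lambda _ (fun t => hmeas t)
  have hXY : ProbabilityTheory.IndepFun (G v) Y P := by
    have h := hindep.indepFun_finset {v} W
      (Finset.disjoint_singleton_left.2 (Finset.notMem_erase v V)) hmeas
    have := h.comp (measurable_pi_apply (⟨v, Finset.mem_singleton_self v⟩ : ({v} : Finset T)))
      measurable_id
    exact this
  have h_map_prod : P.map (fun ω => (G v ω, Y ω)) = (P.map (G v)).prod (P.map Y) :=
    (ProbabilityTheory.indepFun_iff_map_prod_eq_prod_map_map
      (hmeas v).aemeasurable hY.aemeasurable).1 hXY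
  set S : Set (ℝ × (↥W → ℝ)) :=
    {q | ∀ t : ↥W, ℓ t + q.2 t < ℓ v + q.1} with hSdef
  have hS : MeasurableSet S := by
    have : S = ⋂ t : ↥W, {q : ℝ × (↥W → ℝ) | ℓ t + q.2 t < ℓ v + q.1} := by
      ext q; simp [hSdef]
    rw [this]
    exact MeasurableSet.iInter fun t =>
      measurableSet_lt (by fun_prop) (by fun_prop)
  have hE : {ω | ∀ t ∈ V, t ≠ v → ℓ t + G t ω < ℓ v + G v ω}
      = (fun ω => (G v ω, Y ω)) ⁻¹' S := by
    ext ω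
    simp only [Set.mem_setOf_eq, Set.mem_preimage, hSdef, Subtype.forall, Finset.mem_erase, hW,
      hYdef]
    constructor
    · intro h t ht; exact h t ht.2 ht.1
    · intro h t htV htv; exact h t ⟨htv, htV⟩
  set c : ℝ := 1 + s / p v with hc
  have hcpos : 0 < c := by
    have h0 : 0 ≤ s / p v := div_nonneg hs0 (hp v).le
    rw [hc]; linarith
  have h_inner : ∀ x : ℝ, (P.map Y) (Prod.mk x ⁻¹' S)
      = ENNReal.ofReal (Real.exp (-(s / p v) * Real.exp (-x))) := by
    intro x
    rw [Measure.map_apply hY (hS.preimage measurable_prodMk_left)]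
    have hpre : Y ⁻¹' (Prod.mk x ⁻¹' S)
        = ⋂ t ∈ W, G t ⁻¹' (Set.Iio (ℓ v + x - ℓ t)) := by
      ext ω
      simp only [Set.mem_preimage, hSdef, Set.mem_setOf_eq, Set.mem_iInter, Subtype.forall,
        Set.mem_Iio, hYdef]
      constructor
      · intro h t ht; have := h t ht; linarith
      · intro h t ht; have := h t ht; linarith
    rw [hpre, hindep.measure_inter_preimage_eq_mul W
      (sets := fun t => Set.Iio (ℓ v + x - ℓ t)) (fun i _ => measurableSet_Iio)]
    have hfac : ∀ t ∈ W, P (G t ⁻¹' Set.Iio (ℓ v + x - ℓ t))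
        = ENNReal.ofReal (Real.exp (-Real.exp (-(ℓ v + x - ℓ t)))) := fun t _ => hIio t _
    rw [Finset.prod_congr rfl hfac,
      ← ENNReal.ofReal_prod_of_nonneg (fun i _ => (Real.exp_nonneg _))]
    congr 1
    rw [← Real.exp_sum]
    congr 1
    have hterm : ∀ t ∈ W, -Real.exp (-(ℓ v + x - ℓ t)) = -(p t * (p v)⁻¹ * Real.exp (-x)) := by
      intro t _
      have : Real.exp (-(ℓ v + x - ℓ t))
          = Real.exp (ℓ t) * (Real.exp (ℓ v))⁻¹ * Real.exp (-x) := by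
        rw [← Real.exp_neg, ← Real.exp_add, ← Real.exp_add]
        ring_nf
      rw [this, hℓ, Real.exp_log (hp t), Real.exp_log (hp v)]
    rw [Finset.sum_congr rfl hterm]
    rw [show (∑ t ∈ W, -(p t * (p v)⁻¹ * Real.exp (-x)))
        = -((∑ t ∈ W, p t) * ((p v)⁻¹ * Real.exp (-x))) by
      rw [Finset.sum_mul, ← Finset.sum_neg_distrib]; apply Finset.sum_congr rfl; intros; ring]
    rw [← hs, div_eq_mul_inv]
    ring
  rw [hE, ← Measure.map_apply ((hmeas v).prodMk hY) hS, h_map_prod, Measure.prod_apply hS]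
  simp only [h_inner]
  rw [hmap v, gumbelMeasure, lintegral_withDensity_eq_lintegral_mul volume
    (by fun_prop) (by fun_prop)]
  have hcomb : (fun x : ℝ => (ENNReal.ofReal (Real.exp (-x) * Real.exp (-1 * Real.exp (-x))) *
        ENNReal.ofReal (Real.exp (-(s / p v) * Real.exp (-x)))))
      = fun x : ℝ => ENNReal.ofReal (Real.exp (-x) * Real.exp (-c * Real.exp (-x))) := by
    funext x
    rw [← ENNReal.ofReal_mul (by positivity)]
    congr 1
    rw [mul_assoc, ← Real.exp_add]
    congr 2
    rw [hc]
    ring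
  simp only [Pi.mul_apply]
  rw [hcomb, ← ofReal_integral_eq_lintegral_ofReal (gumbel_integrable hcpos)
    (Filter.Eventually.of_forall (fun x => by positivity)), gumbel_integral hcpos]
  congr 1
  rw [hc, ← hpsum]
  have h1 : p v ≠ 0 := (hp v).ne'
  have h2 : p v + s ≠ 0 := by have := hp v; intro h; linarith
  field_simp
  try ring
end
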